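/- arXiv:1101.0221 — 2 statements merged into one kernel-verified Lean document; each statement's English description precedes it below -/
import Mathlib

section
/- Let U be a triangular ring with standard idempotent P, Q = I − P. Suppose G = (δ_i)_{i∈ℕ} is an additive generalized Jordan higher derivation on U with relating higher derivation D = (τ_i), and suppose δ_n(XYX) = Σ_{i+j+k=n} δ_i(X)τ_j(Y)τ_k(X) for all X, Y. If δ_i(P) ∈ PUP + PUQ for all i ≤ n, then δ_n(PXP) ∈ PUP + PUQ for all X ∈ U. -/
set_option linter.unusedSectionVars false

/-- The triangular ring `Tri A M B` of formal upper triangular matrices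
`[[a, m], [0, b]]` with `a ∈ A`, `m ∈ M`, `b ∈ B`, where `M` is an
`(A, B)`-bimodule (the right `B`-action encoded as a left `Bᵐᵒᵖ`-action). -/
@[ext]
structure Tri (A M B : Type*) where
  a : A
  m : M
  b : B

namespace Tri

variable {A M B : Type*} [Ring A] [Ring B] [AddCommGroup M]
  [Module A M] [Module Bᵐᵒᵖ M] [SMulCommClass A Bᵐᵒᵖ M]

instance : Add (Tri A M B) := ⟨fun x y => ⟨x.a + y.a, x.m + y.m, x.b + y.b⟩⟩
instance : Zero (Tri A M B) := ⟨⟨0, 0, 0⟩⟩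
instance : Neg (Tri A M B) := ⟨fun x => ⟨-x.a, -x.m, -x.b⟩⟩
instance : One (Tri A M B) := ⟨⟨1, 0, 1⟩⟩
instance : Mul (Tri A M B) :=
  ⟨fun x y => ⟨x.a * y.a, x.a • y.m + MulOpposite.op y.b • x.m, x.b * y.b⟩⟩

@[simp] lemma add_a (x y : Tri A M B) : (x + y).a = x.a + y.a := rfl
@[simp] lemma add_m (x y : Tri A M B) : (x + y).m = x.m + y.m := rfl
@[simp] lemma add_b (x y : Tri A M B) : (x + y).b = x.b + y.b := rfl
@[simp] lemma zero_a : (0 : Tri A M B).a = 0 := rfl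
@[simp] lemma zero_m : (0 : Tri A M B).m = 0 := rfl
@[simp] lemma zero_b : (0 : Tri A M B).b = 0 := rfl
@[simp] lemma neg_a (x : Tri A M B) : (-x).a = -x.a := rfl
@[simp] lemma neg_m (x : Tri A M B) : (-x).m = -x.m := rfl
@[simp] lemma neg_b (x : Tri A M B) : (-x).b = -x.b := rfl
@[simp] lemma one_a : (1 : Tri A M B).a = 1 := rfl
@[simp] lemma one_m : (1 : Tri A M B).m = 0 := rfl
@[simp] lemma one_b : (1 : Tri A M B).b = 1 := rfl
@[simp] lemma mul_a (x y : Tri A M B) : (x * y).a = x.a * y.a := rfl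
@[simp] lemma mul_m (x y : Tri A M B) :
    (x * y).m = x.a • y.m + MulOpposite.op y.b • x.m := rfl
@[simp] lemma mul_b (x y : Tri A M B) : (x * y).b = x.b * y.b := rfl

/-- The triangular ring structure on `Tri A M B`. -/
instance : Ring (Tri A M B) where
  add_assoc x y z := by ext <;> simp [add_assoc]
  zero_add x := by ext <;> simp
  add_zero x := by ext <;> simp
  add_comm x y := by ext <;> simp [add_comm]
  neg_add_cancel x := by ext <;> simp
  nsmul := nsmulRec
  zsmul := zsmulRec
  left_distrib x y z := by ext <;> simp [mul_add, smul_add, add_smul] <;> abel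
  right_distrib x y z := by ext <;> simp [add_mul, smul_add, add_smul] <;> abel
  zero_mul x := by ext <;> simp
  mul_zero x := by ext <;> simp
  mul_assoc x y z := by
    ext <;> simp [mul_assoc, mul_smul, smul_add, smul_comm] <;> abel
  one_mul x := by ext <;> simp
  mul_one x := by ext <;> simp

end Tri

variable (A M B : Type*) [Ring A] [Ring B] [AddCommGroup M]
  [Module A M] [Module Bᵐᵒᵖ M] [SMulCommClass A Bᵐᵒᵖ M]

/-- The standard idempotent `P = [[1,0],[0,0]]` of the triangular ring. -/
def Tri.P : Tri A M B := ⟨1, 0, 0⟩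

variable {A M B}

/-- Membership in the corner `P·U·Q` of the triangular ring `U`,
where `Q = 1 - P`. -/
def Tri.inPUQ (x : Tri A M B) : Prop :=
  ∃ s : Tri A M B, x = Tri.P A M B * s * (1 - Tri.P A M B)

/-- Membership in `P·U·P + P·U·Q`. -/
def Tri.inPUPQ (x : Tri A M B) : Prop :=
  ∃ s t : Tri A M B,
    x = Tri.P A M B * s * Tri.P A M B + Tri.P A M B * t * (1 - Tri.P A M B)

/-- Membership in `Q·U·Q + P·U·Q`. -/
def Tri.inQUQQ (x : Tri A M B) : Prop :=
  ∃ s t : Tri A M B,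
    x = (1 - Tri.P A M B) * s * (1 - Tri.P A M B) +
      Tri.P A M B * t * (1 - Tri.P A M B)

/-- The `b`-component as an additive group hom. -/
def Tri.bHom : Tri A M B →+ B where
  toFun := Tri.b
  map_zero' := rfl
  map_add' _ _ := rfl

lemma Tri.inPUPQ_iff (x : Tri A M B) : x.inPUPQ ↔ x.b = 0 := by
  constructor
  · rintro ⟨s, t, rfl⟩
    simp [Tri.P]
  · intro hb
    refine ⟨⟨x.a, 0, 0⟩, ⟨0, x.m, 0⟩, ?_⟩
    ext <;> simp [Tri.P, hb, sub_eq_add_neg]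

lemma Tri.b_of_inPUPQ {x : Tri A M B} (h : x.inPUPQ) : x.b = 0 :=
  (Tri.inPUPQ_iff x).mp h

/-- Step 3 of Theorem 3.1: if `δ_n(XYX) = Σ_{i+j+k=n} δ_i(X)τ_j(Y)τ_k(X)` and
`δ_i(P) ∈ PUP + PUQ` for all `i ≤ n`, then `δ_n(PXP) ∈ PUP + PUQ`. -/
theorem stmt8 (δ τ : ℕ → Tri A M B → Tri A M B) (n : ℕ)
    (hδ0 : δ 0 = id) (hτ0 : τ 0 = id)
    (hTriple : ∀ X Y, δ n (X * Y * X) =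
      ∑ ij ∈ Finset.HasAntidiagonal.antidiagonal n, ∑ kl ∈ Finset.HasAntidiagonal.antidiagonal ij.2,
        δ ij.1 X * τ kl.1 Y * τ kl.2 X)
    (hτP : ∀ k, 1 ≤ k → Tri.inPUQ (τ k (Tri.P A M B)))
    (hτPUP : ∀ j X, Tri.inPUPQ (τ j (Tri.P A M B * X * Tri.P A M B)))
    (hδiP : ∀ i ≤ n, Tri.inPUPQ (δ i (Tri.P A M B))) :
    ∀ X, Tri.inPUPQ (δ n (Tri.P A M B * X * Tri.P A M B)) := by
  intro X
  rw [Tri.inPUPQ_iff, hTriple (Tri.P A M B) X]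
  have : ∀ x : Tri A M B, x.b = Tri.bHom x := fun _ => rfl
  rw [this, map_sum]
  refine Finset.sum_eq_zero fun ij hij => ?_
  rw [map_sum]
  refine Finset.sum_eq_zero fun kl _ => ?_
  have hi : ij.1 ≤ n := by
    have := Finset.HasAntidiagonal.antidiagonal.fst_le hij
    omega
  have hb : (δ ij.1 (Tri.P A M B)).b = 0 := Tri.b_of_inPUPQ (hδiP ij.1 hi)
  show (δ ij.1 (Tri.P A M B) * τ kl.1 X * τ kl.2 (Tri.P A M B)).b = 0
  simp [hb]
end

section
/- Let U be a triangular ring with standard idempotent P, Q = I − P, and let G = (δ_i) be an additive generalized Jordan higher derivation with relating higher derivation D = (τ_i), with all inductive hypotheses of Theorem 3.1 through stage n − 1 and δ_n(XYX) = Σ_{i+j+k=n}δ_i(X)τ_j(Y)τ_k(X). Then δ_n(PXPYP)Q = Σ_{i+j=n, i≠n} δ_i(PXP)τ_j(PYP) Q for all X, Y ∈ U. -/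
set_option linter.unusedSectionVars false

variable (A M B : Type*) [Ring A] [Ring B] [AddCommGroup M]
  [Module A M] [Module Bᵐᵒᵖ M] [SMulCommClass A Bᵐᵒᵖ M]

variable {A M B}

/-- Reassociation of a triple antidiagonal sum: summing over `a + b + c = n`
grouped as `a + (b + c)` equals grouping as `(a + b) + c`. -/
lemma sum_ad_assoc {R : Type*} [AddCommMonoid R] (n : ℕ) (f : ℕ → ℕ → ℕ → R) :
    ∑ ij ∈ Finset.HasAntidiagonal.antidiagonal n, ∑ kl ∈ Finset.HasAntidiagonal.antidiagonal ij.2, f ij.1 kl.1 kl.2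
      = ∑ ij ∈ Finset.HasAntidiagonal.antidiagonal n, ∑ kl ∈ Finset.HasAntidiagonal.antidiagonal ij.1, f kl.1 kl.2 ij.2 := by
  rw [Finset.sum_sigma', Finset.sum_sigma']
  refine Finset.sum_nbij' (fun x => ⟨(x.1.1 + x.2.1, x.2.2), (x.1.1, x.2.1)⟩)
    (fun x => ⟨(x.2.1, x.2.2 + x.1.2), (x.2.2, x.1.2)⟩) ?_ ?_ ?_ ?_ ?_ <;>
    rintro ⟨⟨a, b⟩, ⟨c, d⟩⟩ hx <;>
    simp_all [Finset.mem_sigma, Finset.HasAntidiagonal.mem_antidiagonal] <;> omega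

/-- Step 5(1) of Theorem 3.1: under the inductive hypotheses through stage `n - 1`
together with the triple identity at stage `n`,
`δ_n(PXPYP)Q = (Σ_{i+j=n, i≠n} δ_i(PXP)τ_j(PYP))Q`. -/
theorem stmt13 (δ τ : ℕ → Tri A M B → Tri A M B) (n : ℕ)
    (hδ0 : δ 0 = id) (hτ0 : τ 0 = id)
    (hδadd : ∀ k X Y, δ k (X + Y) = δ k X + δ k Y)
    (hτadd : ∀ k X Y, τ k (X + Y) = τ k X + τ k Y)
    (hτHD : ∀ k X Y, τ k (X * Y) = ∑ ij ∈ Finset.HasAntidiagonal.antidiagonal k, τ ij.1 X * τ ij.2 Y)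
    (hτP : ∀ k, 1 ≤ k → Tri.inPUQ (τ k (Tri.P A M B)))
    (hδm : ∀ m < n, ∀ X Y, δ m (X * Y) =
      ∑ ij ∈ Finset.HasAntidiagonal.antidiagonal m, δ ij.1 X * τ ij.2 Y)
    (hTriple : ∀ X Y, δ n (X * Y * X) =
      ∑ ij ∈ Finset.HasAntidiagonal.antidiagonal n, ∑ kl ∈ Finset.HasAntidiagonal.antidiagonal ij.2,
        δ ij.1 X * τ kl.1 Y * τ kl.2 X) :
    ∀ X Y, δ n (Tri.P A M B * X * Tri.P A M B * Y * Tri.P A M B) * (1 - Tri.P A M B) =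
      (∑ ij ∈ (Finset.HasAntidiagonal.antidiagonal n).filter (fun ij => ij.1 ≠ n),
        δ ij.1 (Tri.P A M B * X * Tri.P A M B) *
          τ ij.2 (Tri.P A M B * Y * Tri.P A M B)) * (1 - Tri.P A M B) := by
  intro X Y
  set P := Tri.P A M B with hPdef
  have hPP : P * P = P := by ext <;> simp [hPdef, Tri.P]
  have hPQ : P * (1 - P) = 0 := by rw [mul_sub, mul_one, hPP, sub_self]
  have hQQ : (1 - P) * (1 - P) = 1 - P := by rw [sub_mul, one_mul, hPQ, sub_zero]
  have hPP' : ∀ z : Tri A M B, P * (P * z) = P * z := fun z => by rw [← mul_assoc, hPP]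
  have hkey : ∀ k, τ k P * (1 - P) = if k = 0 then 0 else τ k P := by
    intro k
    rcases Nat.eq_zero_or_pos k with h | h
    · subst h; simp [hτ0, hPQ]
    · obtain ⟨s, hs⟩ := hτP k h
      rw [if_neg (by omega), hs, mul_assoc, hQQ]
  have e1 : P * X * P * Y * P = P * (X * P * Y) * P := by simp only [mul_assoc]
  have e2' : P * (X * (P * Y)) = (P * (X * P)) * (P * Y) := by
    simp only [mul_assoc, hPP']
  have hL : δ n (P * X * P * Y * P) * (1 - P)
      = ∑ ij ∈ Finset.HasAntidiagonal.antidiagonal n, ∑ kl ∈ Finset.HasAntidiagonal.antidiagonal ij.1,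
          δ kl.1 (P * X * P) * (τ kl.2 (P * Y) * (τ ij.2 P * (1 - P))) := by
    rw [e1, hTriple P (X * P * Y), Finset.sum_mul]
    simp only [Finset.sum_mul, mul_assoc, hkey]
    rw [sum_ad_assoc n
      (fun a b c => δ a P * (τ b (X * (P * Y)) * (if c = 0 then 0 else τ c P)))]
    refine Finset.sum_congr rfl (fun ij hij => ?_)
    rcases eq_or_ne ij.2 0 with h0 | h0
    · simp [h0]
    · have hlt : ij.1 < n := by
        have := Finset.HasAntidiagonal.mem_antidiagonal.mp hij; omega
      simp only [if_neg h0]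
      calc ∑ kl ∈ Finset.HasAntidiagonal.antidiagonal ij.1,
            δ kl.1 P * (τ kl.2 (X * (P * Y)) * τ ij.2 P)
          = (∑ kl ∈ Finset.HasAntidiagonal.antidiagonal ij.1,
              δ kl.1 P * τ kl.2 (X * (P * Y))) * τ ij.2 P := by
            rw [Finset.sum_mul]; simp only [mul_assoc]
        _ = δ ij.1 (P * (X * (P * Y))) * τ ij.2 P := by
            rw [← hδm ij.1 hlt P (X * (P * Y))]
        _ = δ ij.1 ((P * (X * P)) * (P * Y)) * τ ij.2 P := by rw [e2']
        _ = (∑ kl ∈ Finset.HasAntidiagonal.antidiagonal ij.1,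
              δ kl.1 (P * (X * P)) * τ kl.2 (P * Y)) * τ ij.2 P := by
            rw [hδm ij.1 hlt (P * (X * P)) (P * Y)]
        _ = ∑ kl ∈ Finset.HasAntidiagonal.antidiagonal ij.1,
              δ kl.1 (P * (X * P)) * (τ kl.2 (P * Y) * τ ij.2 P) := by
            rw [Finset.sum_mul]; simp only [mul_assoc]
  have hR : (∑ ij ∈ (Finset.HasAntidiagonal.antidiagonal n).filter (fun ij => ij.1 ≠ n),
        δ ij.1 (P * X * P) * τ ij.2 (P * Y * P)) * (1 - P)
      = ∑ ij ∈ Finset.HasAntidiagonal.antidiagonal n, ∑ kl ∈ Finset.HasAntidiagonal.antidiagonal ij.2,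
          δ ij.1 (P * X * P) * (τ kl.1 (P * Y) * (τ kl.2 P * (1 - P))) := by
    rw [Finset.sum_mul, Finset.sum_filter]
    refine Finset.sum_congr rfl (fun ij hij => ?_)
    rcases eq_or_ne ij.1 n with h1 | h1
    · have h2 : ij.2 = 0 := by
        have := Finset.HasAntidiagonal.mem_antidiagonal.mp hij; omega
      rw [if_neg (by simp [h1]), h2]
      simp [hτ0, hPQ]
    · rw [if_pos h1, hτHD ij.2 (P * Y) P]
      simp only [Finset.mul_sum, Finset.sum_mul, mul_assoc]
  rw [hL, hR]
  exact (sum_ad_assoc n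
    (fun a b c => δ a (P * X * P) * (τ b (P * Y) * (τ c P * (1 - P))))).symm
end
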